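/- Let (U₁,…,U_d) be distributed according to the probability measure on [0,1]^d with the extended FGM density c (parameters λ^(k)_M satisfying the admissibility constraint), and let M ⊆ {1,…,d} with |M| ≥ 2. Then Var(∏_{m ∈ M} φ₁(U_m)) = s^(1)_M − (λ^(1)_M)² where s^(1)_M = 1 + ∑_{j=2}^{|M|} ∑_{N ⊆ M, |N| = j} (2/√5)^{|N|} λ^(2)_N, and Var(∏_{m ∈ M} φ₂(U_m)) = s^(2)_M − (λ^(2)_M)² where s^(2)_M = 1 + ∑_{j=2}^{|M|} ∑_{N ⊆ M, |N| = j} (2√5/7)^{|N|} λ^(2)_N. -/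

import Mathlib

open MeasureTheory ProbabilityTheory Real Finset
open scoped ENNReal NNReal

/-- The shifted Legendre-type functions: `φ₁(x) = √3 (2x − 1)` and
`φ₂(x) = √5 (6x² − 6x + 1)`. -/
noncomputable def phiFGM (k : ℕ) (x : ℝ) : ℝ :=
  if k = 1 then Real.sqrt 3 * (2 * x - 1) else Real.sqrt 5 * (6 * x ^ 2 - 6 * x + 1)

/-- Antiderivatives: `Φ₁(x) = √3 (x² − x)` and `Φ₂(x) = √5 (2x³ − 3x² + x)`. -/
noncomputable def PhiFGM (k : ℕ) (x : ℝ) : ℝ :=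
  if k = 1 then Real.sqrt 3 * (x ^ 2 - x) else Real.sqrt 5 * (2 * x ^ 3 - 3 * x ^ 2 + x)

/-- The density of the extended `d`-variate FGM copula with parameters `lam k M`:
`c(u) = 1 + ∑_{k=1}^2 ∑_{M ⊆ {1,…,d}, |M| ≥ 2} λ^(k)_M ∏_{m ∈ M} φ_k(u_m)`. -/
noncomputable def fgmDensity (d : ℕ) (lam : ℕ → Finset (Fin d) → ℝ) (u : Fin d → ℝ) : ℝ :=
  1 + ∑ k ∈ Finset.Icc 1 2, ∑ M ∈ Finset.univ.powerset.filter (fun M : Finset (Fin d) => 2 ≤ M.card),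
      lam k M * ∏ m ∈ M, phiFGM k (u m)

/-- The admissibility constraint
`∑_{j=2}^d [ (√3)^j ∑_{|M|=j} |λ^(1)_M| + (√5)^j ∑_{|M|=j} |λ^(2)_M| ] ≤ 1`. -/
def fgmAdmissible (d : ℕ) (lam : ℕ → Finset (Fin d) → ℝ) : Prop :=
  ∑ M ∈ Finset.univ.powerset.filter (fun M : Finset (Fin d) => 2 ≤ M.card),
      (Real.sqrt 3 ^ M.card * |lam 1 M| + Real.sqrt 5 ^ M.card * |lam 2 M|) ≤ 1

/-- The probability measure on `[0,1]^d` with density `c`: the uniform measure on the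
unit cube reweighted by the extended FGM copula density. -/
noncomputable def fgmMeasure (d : ℕ) (lam : ℕ → Finset (Fin d) → ℝ) :
    Measure (Fin d → ℝ) :=
  (Measure.pi fun _ : Fin d => volume.restrict (Set.Icc (0:ℝ) 1)).withDensity
    fun u => ENNReal.ofReal (fgmDensity d lam u)

/-! ### Auxiliary set-up -/

/-- The base (uniform) measure on the unit cube. -/
noncomputable def muP (d : ℕ) : Measure (Fin d → ℝ) :=
  Measure.pi fun _ : Fin d => (volume : Measure ℝ).restrict (Set.Icc (0:ℝ) 1)

instance : IsProbabilityMeasure ((volume : Measure ℝ).restrict (Set.Icc (0:ℝ) 1)) :=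
  ⟨by simp⟩

instance (d : ℕ) : IsProbabilityMeasure (muP d) := by
  unfold muP; infer_instance

/-- Type synonym for `ℝ` carrying the uniform measure on `[0,1]`. -/
def UnitI : Type := ℝ

instance : MeasurableSpace UnitI := (inferInstance : MeasurableSpace ℝ)

noncomputable instance : MeasureSpace UnitI :=
  ⟨(volume : Measure ℝ).restrict (Set.Icc (0:ℝ) 1)⟩

instance : SigmaFinite (volume : Measure UnitI) :=
  (inferInstance : SigmaFinite ((volume : Measure ℝ).restrict (Set.Icc (0:ℝ) 1)))

lemma pi_int (d : ℕ) (F : Fin d → ℝ → ℝ) :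
    ∫ x : Fin d → ℝ, ∏ i, F i (x i) ∂(muP d)
      = ∏ i, ∫ x in Set.Icc (0:ℝ) 1, F i x :=
  MeasureTheory.integral_fintype_prod_eq_prod (𝕜 := ℝ) (ι := Fin d) (E := fun _ => ℝ) F

lemma phi_cont (k : ℕ) : Continuous (phiFGM k) := by
  rcases eq_or_ne k 1 with h | h
  · have he : phiFGM k = fun x => Real.sqrt 3 * (2 * x - 1) := by
      funext x; rw [phiFGM, if_pos h]
    rw [he]; fun_prop
  · have he : phiFGM k = fun x => Real.sqrt 5 * (6 * x ^ 2 - 6 * x + 1) := by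
      funext x; rw [phiFGM, if_neg h]
    rw [he]; fun_prop

/-! ### One-dimensional integrals -/

lemma icc_ii (f : ℝ → ℝ) : ∫ x in Set.Icc (0:ℝ) 1, f x = ∫ x in (0:ℝ)..1, f x := by
  rw [intervalIntegral.integral_of_le zero_le_one, MeasureTheory.integral_Icc_eq_integral_Ioc]

lemma ipow (p : ℝ) (n : ℕ) : ∫ x in (0:ℝ)..1, p * x ^ n = p / (n + 1) := by
  rw [intervalIntegral.integral_const_mul, integral_pow]
  simp
  ring

lemma ipoly6 (c0 c1 c2 c3 c4 c5 c6 : ℝ) :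
    ∫ x in (0:ℝ)..1,
        (c0 * x ^ 0 + c1 * x ^ 1 + c2 * x ^ 2 + c3 * x ^ 3 + c4 * x ^ 4 + c5 * x ^ 5
          + c6 * x ^ 6)
      = c0 / 1 + c1 / 2 + c2 / 3 + c3 / 4 + c4 / 5 + c5 / 6 + c6 / 7 := by
  have I : ∀ (p : ℝ) (n : ℕ), IntervalIntegrable (fun x : ℝ => p * x ^ n) volume 0 1 :=
    fun p n => (continuous_const.mul (continuous_pow n)).intervalIntegrable _ _
  rw [intervalIntegral.integral_add
        ((((((I c0 0).add (I c1 1)).add (I c2 2)).add (I c3 3)).add (I c4 4)).add (I c5 5))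
        (I c6 6),
      intervalIntegral.integral_add
        (((((I c0 0).add (I c1 1)).add (I c2 2)).add (I c3 3)).add (I c4 4)) (I c5 5),
      intervalIntegral.integral_add
        ((((I c0 0).add (I c1 1)).add (I c2 2)).add (I c3 3)) (I c4 4),
      intervalIntegral.integral_add (((I c0 0).add (I c1 1)).add (I c2 2)) (I c3 3),
      intervalIntegral.integral_add ((I c0 0).add (I c1 1)) (I c2 2),
      intervalIntegral.integral_add (I c0 0) (I c1 1),
      ipow, ipow, ipow, ipow, ipow, ipow, ipow]
  norm_num

lemma int_eval (f : ℝ → ℝ) (c0 c1 c2 c3 c4 c5 c6 : ℝ)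
    (hf : ∀ x : ℝ, f x = c0 * x ^ 0 + c1 * x ^ 1 + c2 * x ^ 2 + c3 * x ^ 3 + c4 * x ^ 4
        + c5 * x ^ 5 + c6 * x ^ 6) :
    ∫ x in Set.Icc (0:ℝ) 1, f x
      = c0 / 1 + c1 / 2 + c2 / 3 + c3 / 4 + c4 / 5 + c5 / 6 + c6 / 7 := by
  rw [icc_ii, ← ipoly6 c0 c1 c2 c3 c4 c5 c6]
  exact intervalIntegral.integral_congr fun x _ => hf x

lemma h3sq : Real.sqrt 3 ^ 2 = 3 := Real.sq_sqrt (by norm_num)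
lemma h5sq : Real.sqrt 5 ^ 2 = 5 := Real.sq_sqrt (by norm_num)

lemma phi1_eq (x : ℝ) : phiFGM 1 x = Real.sqrt 3 * (2 * x - 1) := rfl
lemma phi2_eq (x : ℝ) : phiFGM 2 x = Real.sqrt 5 * (6 * x ^ 2 - 6 * x + 1) := rfl

lemma int_phi1 : ∫ x in Set.Icc (0:ℝ) 1, phiFGM 1 x = 0 := by
  rw [int_eval (phiFGM 1) (-Real.sqrt 3) (2 * Real.sqrt 3) 0 0 0 0 0
      (fun x => by simp only [phi1_eq]; ring)]
  ring

lemma int_phi2 : ∫ x in Set.Icc (0:ℝ) 1, phiFGM 2 x = 0 := by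
  rw [int_eval (phiFGM 2) (Real.sqrt 5) (-6 * Real.sqrt 5) (6 * Real.sqrt 5) 0 0 0 0
      (fun x => by simp only [phi2_eq]; ring)]
  ring

lemma int_p1p1 : ∫ x in Set.Icc (0:ℝ) 1, phiFGM 1 x * phiFGM 1 x = 1 := by
  rw [int_eval (fun x => phiFGM 1 x * phiFGM 1 x) 3 (-12) 12 0 0 0 0
      (fun x => by simp only [phi1_eq]; linear_combination (2 * x - 1) ^ 2 * h3sq)]
  norm_num

lemma int_p2p2 : ∫ x in Set.Icc (0:ℝ) 1, phiFGM 2 x * phiFGM 2 x = 1 := by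
  rw [int_eval (fun x => phiFGM 2 x * phiFGM 2 x) 5 (-60) 240 (-360) 180 0 0
      (fun x => by simp only [phi2_eq]; linear_combination (6 * x ^ 2 - 6 * x + 1) ^ 2 * h5sq)]
  norm_num

lemma int_p1p2 : ∫ x in Set.Icc (0:ℝ) 1, phiFGM 1 x * phiFGM 2 x = 0 := by
  rw [int_eval (fun x => phiFGM 1 x * phiFGM 2 x)
      (-(Real.sqrt 3 * Real.sqrt 5)) (8 * (Real.sqrt 3 * Real.sqrt 5))
      (-18 * (Real.sqrt 3 * Real.sqrt 5)) (12 * (Real.sqrt 3 * Real.sqrt 5)) 0 0 0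
      (fun x => by simp only [phi1_eq, phi2_eq]; ring)]
  ring

lemma int_p2p1 : ∫ x in Set.Icc (0:ℝ) 1, phiFGM 2 x * phiFGM 1 x = 0 := by
  have : ∀ x ∈ Set.Icc (0:ℝ) 1, phiFGM 2 x * phiFGM 1 x = phiFGM 1 x * phiFGM 2 x :=
    fun x _ => mul_comm _ _
  rw [MeasureTheory.setIntegral_congr_fun measurableSet_Icc this]
  exact int_p1p2

lemma int_sq1 : ∫ x in Set.Icc (0:ℝ) 1, phiFGM 1 x ^ 2 = 1 := by
  rw [int_eval (fun x => phiFGM 1 x ^ 2) 3 (-12) 12 0 0 0 0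
      (fun x => by simp only [phi1_eq]; linear_combination (2 * x - 1) ^ 2 * h3sq)]
  norm_num

lemma int_sq2 : ∫ x in Set.Icc (0:ℝ) 1, phiFGM 2 x ^ 2 = 1 := by
  rw [int_eval (fun x => phiFGM 2 x ^ 2) 5 (-60) 240 (-360) 180 0 0
      (fun x => by simp only [phi2_eq]; linear_combination (6 * x ^ 2 - 6 * x + 1) ^ 2 * h5sq)]
  norm_num

lemma int_p1sq1 : ∫ x in Set.Icc (0:ℝ) 1, phiFGM 1 x * phiFGM 1 x ^ 2 = 0 := by
  rw [int_eval (fun x => phiFGM 1 x * phiFGM 1 x ^ 2)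
      (-(3 * Real.sqrt 3)) (6 * (3 * Real.sqrt 3)) (-12 * (3 * Real.sqrt 3))
      (8 * (3 * Real.sqrt 3)) 0 0 0
      (fun x => by
        simp only [phi1_eq]
        linear_combination (Real.sqrt 3 * (2 * x - 1) ^ 3) * h3sq)]
  ring

lemma int_p2sq1 : ∫ x in Set.Icc (0:ℝ) 1, phiFGM 2 x * phiFGM 1 x ^ 2 = 2 / Real.sqrt 5 := by
  rw [int_eval (fun x => phiFGM 2 x * phiFGM 1 x ^ 2)
      (3 * Real.sqrt 5) (-10 * (3 * Real.sqrt 5)) (34 * (3 * Real.sqrt 5))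
      (-48 * (3 * Real.sqrt 5)) (24 * (3 * Real.sqrt 5)) 0 0
      (fun x => by
        simp only [phi1_eq, phi2_eq]
        linear_combination (Real.sqrt 5 * (6 * x ^ 2 - 6 * x + 1) * (2 * x - 1) ^ 2) * h3sq)]
  have h5' : Real.sqrt 5 ≠ 0 := by positivity
  rw [eq_div_iff h5']
  linear_combination (2 / 5) * h5sq

lemma int_p1sq2 : ∫ x in Set.Icc (0:ℝ) 1, phiFGM 1 x * phiFGM 2 x ^ 2 = 0 := by
  rw [int_eval (fun x => phiFGM 1 x * phiFGM 2 x ^ 2)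
      (-(5 * Real.sqrt 3)) (14 * (5 * Real.sqrt 3)) (-72 * (5 * Real.sqrt 3))
      (168 * (5 * Real.sqrt 3)) (-180 * (5 * Real.sqrt 3)) (72 * (5 * Real.sqrt 3)) 0
      (fun x => by
        simp only [phi1_eq, phi2_eq]
        linear_combination (Real.sqrt 3 * (2 * x - 1) * (6 * x ^ 2 - 6 * x + 1) ^ 2) * h5sq)]
  ring

lemma int_p2sq2 : ∫ x in Set.Icc (0:ℝ) 1, phiFGM 2 x * phiFGM 2 x ^ 2
    = 2 * Real.sqrt 5 / 7 := by
  rw [int_eval (fun x => phiFGM 2 x * phiFGM 2 x ^ 2)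
      (5 * Real.sqrt 5) (-18 * (5 * Real.sqrt 5)) (126 * (5 * Real.sqrt 5))
      (-432 * (5 * Real.sqrt 5)) (756 * (5 * Real.sqrt 5)) (-648 * (5 * Real.sqrt 5))
      (216 * (5 * Real.sqrt 5))
      (fun x => by
        simp only [phi2_eq]
        linear_combination (Real.sqrt 5 * (6 * x ^ 2 - 6 * x + 1) ^ 3) * h5sq)]
  ring

lemma int_one : ∫ x in Set.Icc (0:ℝ) 1, (1:ℝ) = 1 := by simp

/-! ### Basic properties of the density and measure -/

lemma phi1_bound (x : ℝ) (hx : x ∈ Set.Icc (0:ℝ) 1) : |phiFGM 1 x| ≤ Real.sqrt 3 := by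
  rw [phi1_eq, abs_mul, abs_of_nonneg (Real.sqrt_nonneg 3)]
  have h1 : |2 * x - 1| ≤ 1 := abs_le.mpr ⟨by linarith [hx.1], by linarith [hx.2]⟩
  calc Real.sqrt 3 * |2 * x - 1| ≤ Real.sqrt 3 * 1 :=
        mul_le_mul_of_nonneg_left h1 (Real.sqrt_nonneg 3)
    _ = Real.sqrt 3 := mul_one _

lemma phi2_bound (x : ℝ) (hx : x ∈ Set.Icc (0:ℝ) 1) : |phiFGM 2 x| ≤ Real.sqrt 5 := by
  rw [phi2_eq, abs_mul, abs_of_nonneg (Real.sqrt_nonneg 5)]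
  have h1 : |6 * x ^ 2 - 6 * x + 1| ≤ 1 := by
    rw [abs_le]
    constructor
    · nlinarith [sq_nonneg (2 * x - 1)]
    · nlinarith [mul_nonneg hx.1 (by linarith [hx.2] : (0:ℝ) ≤ 1 - x)]
  calc Real.sqrt 5 * |6 * x ^ 2 - 6 * x + 1| ≤ Real.sqrt 5 * 1 :=
        mul_le_mul_of_nonneg_left h1 (Real.sqrt_nonneg 5)
    _ = Real.sqrt 5 := mul_one _

lemma ae_cube (d : ℕ) : ∀ᵐ u ∂(muP d), ∀ i, u i ∈ Set.Icc (0:ℝ) 1 := by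
  rw [MeasureTheory.ae_all_iff]
  intro i
  rw [MeasureTheory.ae_iff]
  have hsub : {u : Fin d → ℝ | ¬ u i ∈ Set.Icc (0:ℝ) 1}
      ⊆ Set.pi Set.univ
          (Function.update (fun _ : Fin d => (Set.univ : Set ℝ)) i (Set.Icc (0:ℝ) 1)ᶜ) := by
    intro u hu j _
    rcases eq_or_ne j i with rfl | hj
    · simpa [Function.update_self] using hu
    · simp [Function.update_of_ne hj]
  refine measure_mono_null hsub ?_
  rw [muP, Measure.pi_pi]
  refine Finset.prod_eq_zero (Finset.mem_univ i) ?_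
  rw [Function.update_self, Measure.restrict_apply measurableSet_Icc.compl,
    Set.compl_inter_self]
  exact measure_empty

lemma cont_density (d : ℕ) (lam : ℕ → Finset (Fin d) → ℝ) :
    Continuous (fgmDensity d lam) := by
  unfold fgmDensity
  exact continuous_const.add (continuous_finset_sum _ fun k _ =>
    continuous_finset_sum _ fun N _ =>
      continuous_const.mul (continuous_finset_prod _ fun m _ =>
        (phi_cont k).comp (continuous_apply m)))

lemma cube_integrable (d : ℕ) (f : (Fin d → ℝ) → ℝ) (hf : Continuous f) :
    Integrable f (muP d) := by
  obtain ⟨C, hC⟩ :=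
    (isCompact_Icc (a := (0 : Fin d → ℝ)) (b := 1)).exists_bound_of_continuousOn
      hf.continuousOn
  refine ⟨hf.aestronglyMeasurable, ?_⟩
  refine MeasureTheory.HasFiniteIntegral.of_bounded (C := C) ?_
  filter_upwards [ae_cube d] with u hu
  exact hC u (Set.mem_Icc.mpr ⟨fun i => (hu i).1, fun i => (hu i).2⟩)

lemma prod_phi_bound (d : ℕ) (k : ℕ) (B : ℝ)
    (hb : ∀ x ∈ Set.Icc (0:ℝ) 1, |phiFGM k x| ≤ B)
    (N : Finset (Fin d)) (u : Fin d → ℝ) (hu : ∀ i, u i ∈ Set.Icc (0:ℝ) 1) :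
    |∏ m ∈ N, phiFGM k (u m)| ≤ B ^ N.card := by
  rw [Finset.abs_prod]
  calc ∏ m ∈ N, |phiFGM k (u m)| ≤ ∏ _m ∈ N, B :=
        Finset.prod_le_prod (fun i _ => abs_nonneg _) (fun m _ => hb (u m) (hu m))
    _ = B ^ N.card := Finset.prod_const _

lemma density_nonneg (d : ℕ) (lam : ℕ → Finset (Fin d) → ℝ) (hlam : fgmAdmissible d lam)
    (u : Fin d → ℝ) (hu : ∀ i, u i ∈ Set.Icc (0:ℝ) 1) :
    0 ≤ fgmDensity d lam u := by
  have key : |∑ k ∈ Finset.Icc 1 2,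
      ∑ N ∈ Finset.univ.powerset.filter (fun N : Finset (Fin d) => 2 ≤ N.card),
        lam k N * ∏ m ∈ N, phiFGM k (u m)| ≤ 1 := by
    rw [show Finset.Icc 1 2 = ({1, 2} : Finset ℕ) from rfl,
      Finset.sum_insert (by decide), Finset.sum_singleton, ← Finset.sum_add_distrib]
    refine le_trans (Finset.abs_sum_le_sum_abs _ _) (le_trans (Finset.sum_le_sum ?_) hlam)
    intro N _
    have b1 := prod_phi_bound d 1 (Real.sqrt 3) (fun x hx => phi1_bound x hx) N u hu
    have b2 := prod_phi_bound d 2 (Real.sqrt 5) (fun x hx => phi2_bound x hx) N u hu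
    calc |lam 1 N * ∏ m ∈ N, phiFGM 1 (u m) + lam 2 N * ∏ m ∈ N, phiFGM 2 (u m)|
        ≤ |lam 1 N| * |∏ m ∈ N, phiFGM 1 (u m)| + |lam 2 N| * |∏ m ∈ N, phiFGM 2 (u m)| := by
          refine le_trans (abs_add_le _ _) ?_
          rw [abs_mul, abs_mul]
      _ ≤ |lam 1 N| * Real.sqrt 3 ^ N.card + |lam 2 N| * Real.sqrt 5 ^ N.card := by
          gcongr
      _ = Real.sqrt 3 ^ N.card * |lam 1 N| + Real.sqrt 5 ^ N.card * |lam 2 N| := by ring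
  have := (abs_le.mp key).1
  unfold fgmDensity
  linarith

lemma fgm_eq (d : ℕ) (lam : ℕ → Finset (Fin d) → ℝ) :
    fgmMeasure d lam
      = (muP d).withDensity fun u => ((fgmDensity d lam u).toNNReal : ℝ≥0∞) := rfl

lemma fgm_int (d : ℕ) (lam : ℕ → Finset (Fin d) → ℝ) (hlam : fgmAdmissible d lam)
    (f : (Fin d → ℝ) → ℝ) :
    ∫ u, f u ∂(fgmMeasure d lam) = ∫ u, fgmDensity d lam u * f u ∂(muP d) := by
  rw [fgm_eq, integral_withDensity_eq_integral_smul
    (cont_density d lam).measurable.real_toNNReal f]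
  refine integral_congr_ae ?_
  filter_upwards [ae_cube d] with u hu
  have h0 := density_nonneg d lam hlam u hu
  simp [NNReal.smul_def, Real.coe_toNNReal _ h0]

/-! ### Product over an if-split -/

lemma prod_ite_val (d : ℕ) (M N : Finset (Fin d)) (a b : ℝ) :
    (∏ i : Fin d, (if i ∈ N then (if i ∈ M then b else 0) else (if i ∈ M then a else 1)))
      = b ^ (M ∩ N).card * a ^ (M \ N).card * 0 ^ (N \ M).card := by
  classical
  have h1 : (∏ i ∈ M ∪ N,
        (if i ∈ N then (if i ∈ M then b else 0) else (if i ∈ M then a else 1)))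
      = ∏ i : Fin d,
        (if i ∈ N then (if i ∈ M then b else 0) else (if i ∈ M then a else 1)) := by
    refine Finset.prod_subset (Finset.subset_univ _) ?_
    intro i _ hi
    have hiM : i ∉ M := fun h => hi (Finset.mem_union_left _ h)
    have hiN : i ∉ N := fun h => hi (Finset.mem_union_right _ h)
    rw [if_neg hiN, if_neg hiM]
  rw [← h1]
  have hsplit : M ∪ N = (M ∩ N ∪ M \ N) ∪ N \ M := by
    rw [Finset.union_comm (M ∩ N) (M \ N), Finset.sdiff_union_inter,
      Finset.union_sdiff_self_eq_union]
  have hd1 : Disjoint (M ∩ N ∪ M \ N) (N \ M) := by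
    rw [Finset.union_comm (M ∩ N) (M \ N), Finset.sdiff_union_inter]
    exact Finset.sdiff_disjoint.symm
  have hd2 : Disjoint (M ∩ N) (M \ N) :=
    Finset.disjoint_left.mpr fun i hi1 hi2 =>
      (Finset.mem_sdiff.mp hi2).2 (Finset.mem_inter.mp hi1).2
  rw [hsplit, Finset.prod_union hd1, Finset.prod_union hd2]
  have p1 : (∏ i ∈ M ∩ N,
      (if i ∈ N then (if i ∈ M then b else 0) else (if i ∈ M then a else 1)))
      = b ^ (M ∩ N).card := by
    rw [Finset.prod_congr rfl (fun i hi => ?_), Finset.prod_const]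
    rw [Finset.mem_inter] at hi
    rw [if_pos hi.2, if_pos hi.1]
  have p2 : (∏ i ∈ M \ N,
      (if i ∈ N then (if i ∈ M then b else 0) else (if i ∈ M then a else 1)))
      = a ^ (M \ N).card := by
    rw [Finset.prod_congr rfl (fun i hi => ?_), Finset.prod_const]
    rw [Finset.mem_sdiff] at hi
    rw [if_neg hi.2, if_pos hi.1]
  have p3 : (∏ i ∈ N \ M,
      (if i ∈ N then (if i ∈ M then b else 0) else (if i ∈ M then a else 1)))
      = (0:ℝ) ^ (N \ M).card := by
    rw [Finset.prod_congr rfl (fun i hi => ?_), Finset.prod_const]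
    rw [Finset.mem_sdiff] at hi
    rw [if_pos hi.1, if_neg hi.2]
  rw [p1, p2, p3]

/-! ### The key moment computation -/

lemma fgm_moment (d : ℕ) (lam : ℕ → Finset (Fin d) → ℝ) (hlam : fgmAdmissible d lam)
    (M : Finset (Fin d)) (g : ℝ → ℝ) (hg : Continuous g) (a b1 b2 : ℝ)
    (ha : ∫ x in Set.Icc (0:ℝ) 1, g x = a)
    (hb1 : ∫ x in Set.Icc (0:ℝ) 1, phiFGM 1 x * g x = b1)
    (hb2 : ∫ x in Set.Icc (0:ℝ) 1, phiFGM 2 x * g x = b2) :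
    ∫ u, ∏ m ∈ M, g (u m) ∂(fgmMeasure d lam)
      = a ^ M.card
        + ∑ N ∈ Finset.univ.powerset.filter (fun N : Finset (Fin d) => 2 ≤ N.card),
            (lam 1 N * (b1 ^ (M ∩ N).card * a ^ (M \ N).card * 0 ^ (N \ M).card)
              + lam 2 N * (b2 ^ (M ∩ N).card * a ^ (M \ N).card * 0 ^ (N \ M).card)) := by
  classical
  set A := Finset.univ.powerset.filter (fun N : Finset (Fin d) => 2 ≤ N.card) with hA
  have hXc : Continuous fun u : Fin d → ℝ => ∏ m ∈ M, g (u m) :=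
    continuous_finset_prod _ fun m _ => hg.comp (continuous_apply m)
  have contP : ∀ (k : ℕ) (N : Finset (Fin d)), Continuous fun u : Fin d → ℝ =>
      (∏ m ∈ N, phiFGM k (u m)) * ∏ m ∈ M, g (u m) := fun k N =>
    (continuous_finset_prod _ fun m _ => (phi_cont k).comp (continuous_apply m)).mul hXc
  -- the per-N integral
  have key : ∀ (k : ℕ) (b : ℝ), (∫ x in Set.Icc (0:ℝ) 1, phiFGM k x = 0) →
      (∫ x in Set.Icc (0:ℝ) 1, phiFGM k x * g x = b) → ∀ N : Finset (Fin d),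
      ∫ u, (∏ m ∈ N, phiFGM k (u m)) * ∏ m ∈ M, g (u m) ∂(muP d)
        = b ^ (M ∩ N).card * a ^ (M \ N).card * 0 ^ (N \ M).card := by
    intro k b h0 hb N
    have hrw : (fun u : Fin d → ℝ => (∏ m ∈ N, phiFGM k (u m)) * ∏ m ∈ M, g (u m))
        = fun u => ∏ i : Fin d,
            ((if i ∈ N then phiFGM k (u i) else 1) * (if i ∈ M then g (u i) else 1)) := by
      funext u
      rw [Finset.prod_mul_distrib, Finset.prod_ite_mem, Finset.prod_ite_mem,
        Finset.univ_inter, Finset.univ_inter]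
    rw [hrw, pi_int d (fun i x => (if i ∈ N then phiFGM k x else 1)
        * (if i ∈ M then g x else 1))]
    have hi : ∀ i : Fin d, (∫ x in Set.Icc (0:ℝ) 1,
          ((if i ∈ N then phiFGM k x else 1) * (if i ∈ M then g x else 1)))
        = if i ∈ N then (if i ∈ M then b else 0) else (if i ∈ M then a else 1) := by
      intro i
      by_cases hN : i ∈ N <;> by_cases hM : i ∈ M
      · simp only [if_pos hN, if_pos hM]; exact hb
      · simp only [if_pos hN, if_neg hM, mul_one]; exact h0
      · simp only [if_neg hN, if_pos hM, one_mul]; exact ha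
      · simp only [if_neg hN, if_neg hM, mul_one]; simp
    rw [Finset.prod_congr rfl fun i _ => hi i]
    exact prod_ite_val d M N a b
  -- first term
  have first : ∫ u, ∏ m ∈ M, g (u m) ∂(muP d) = a ^ M.card := by
    have hrw : (fun u : Fin d → ℝ => ∏ m ∈ M, g (u m))
        = fun u => ∏ i : Fin d, (if i ∈ M then g (u i) else 1) := by
      funext u
      rw [Finset.prod_ite_mem, Finset.univ_inter]
    rw [hrw, pi_int d (fun i x => if i ∈ M then g x else 1)]
    have hi : ∀ i : Fin d, (∫ x in Set.Icc (0:ℝ) 1, (if i ∈ M then g x else 1))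
        = if i ∈ M then a else 1 := by
      intro i
      by_cases hM : i ∈ M
      · simp only [if_pos hM]; exact ha
      · simp only [if_neg hM]; simp
    rw [Finset.prod_congr rfl fun i _ => hi i, Finset.prod_ite_mem, Finset.univ_inter,
      Finset.prod_const]
  -- expansion of the density
  have expand : ∀ u : Fin d → ℝ, fgmDensity d lam u * ∏ m ∈ M, g (u m)
      = (∏ m ∈ M, g (u m))
        + ∑ N ∈ A, (lam 1 N * ((∏ m ∈ N, phiFGM 1 (u m)) * ∏ m ∈ M, g (u m))
            + lam 2 N * ((∏ m ∈ N, phiFGM 2 (u m)) * ∏ m ∈ M, g (u m))) := by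
    intro u
    simp only [fgmDensity, show Finset.Icc 1 2 = ({1, 2} : Finset ℕ) from rfl,
      Finset.sum_insert (by decide : (1:ℕ) ∉ ({2} : Finset ℕ)), Finset.sum_singleton, ← hA]
    rw [add_mul, one_mul, add_mul, Finset.sum_mul, Finset.sum_mul, ← Finset.sum_add_distrib]
    congr 1
    exact Finset.sum_congr rfl fun N _ => by ring
  have I1 : Integrable (fun u => ∏ m ∈ M, g (u m)) (muP d) := cube_integrable d _ hXc
  have I2 : ∀ (k : ℕ) (N : Finset (Fin d)),
      Integrable (fun u => (∏ m ∈ N, phiFGM k (u m)) * ∏ m ∈ M, g (u m)) (muP d) :=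
    fun k N => cube_integrable d _ (contP k N)
  have I3 : ∀ N ∈ A, Integrable (fun u =>
      lam 1 N * ((∏ m ∈ N, phiFGM 1 (u m)) * ∏ m ∈ M, g (u m))
        + lam 2 N * ((∏ m ∈ N, phiFGM 2 (u m)) * ∏ m ∈ M, g (u m))) (muP d) :=
    fun N _ => ((I2 1 N).const_mul _).add ((I2 2 N).const_mul _)
  rw [fgm_int d lam hlam _]
  calc ∫ u, fgmDensity d lam u * ∏ m ∈ M, g (u m) ∂(muP d)
      = ∫ u, ((∏ m ∈ M, g (u m))
          + ∑ N ∈ A, (lam 1 N * ((∏ m ∈ N, phiFGM 1 (u m)) * ∏ m ∈ M, g (u m))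
            + lam 2 N * ((∏ m ∈ N, phiFGM 2 (u m)) * ∏ m ∈ M, g (u m)))) ∂(muP d) :=
        integral_congr_ae (Filter.Eventually.of_forall expand)
    _ = (∫ u, ∏ m ∈ M, g (u m) ∂(muP d))
          + ∑ N ∈ A, ∫ u, (lam 1 N * ((∏ m ∈ N, phiFGM 1 (u m)) * ∏ m ∈ M, g (u m))
            + lam 2 N * ((∏ m ∈ N, phiFGM 2 (u m)) * ∏ m ∈ M, g (u m))) ∂(muP d) := by
        rw [integral_add I1 (integrable_finset_sum A I3), integral_finset_sum A I3]
    _ = a ^ M.card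
          + ∑ N ∈ A, (lam 1 N * (b1 ^ (M ∩ N).card * a ^ (M \ N).card * 0 ^ (N \ M).card)
            + lam 2 N * (b2 ^ (M ∩ N).card * a ^ (M \ N).card * 0 ^ (N \ M).card)) := by
        rw [first]
        congr 1
        refine Finset.sum_congr rfl fun N _ => ?_
        rw [integral_add ((I2 1 N).const_mul _) ((I2 2 N).const_mul _),
          integral_const_mul, integral_const_mul, key 1 b1 int_phi1 hb1 N,
          key 2 b2 int_phi2 hb2 N]

/-! ### The FGM measure is a probability measure -/

lemma fgm_prob (d : ℕ) (lam : ℕ → Finset (Fin d) → ℝ) (hlam : fgmAdmissible d lam) :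
    IsProbabilityMeasure (fgmMeasure d lam) := by
  have h1 : ∫ u, ∏ m ∈ (∅ : Finset (Fin d)), (fun _ : ℝ => (1:ℝ)) (u m)
      ∂(fgmMeasure d lam) = 1 := by
    rw [fgm_moment d lam hlam ∅ (fun _ => (1:ℝ)) continuous_const 1 0 0 int_one
      (by simpa using int_phi1) (by simpa using int_phi2)]
    rw [Finset.card_empty, pow_zero]
    rw [Finset.sum_eq_zero, add_zero]
    intro N hN
    rw [Finset.mem_filter] at hN
    have hcard : (N \ (∅ : Finset (Fin d))).card ≠ 0 := by
      rw [Finset.sdiff_empty]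
      omega
    rw [zero_pow hcard]
    ring
  simp only [Finset.prod_empty] at h1
  rw [integral_const, smul_eq_mul, mul_one] at h1
  exact ⟨(ENNReal.toReal_eq_one_iff _).mp h1⟩

lemma fgm_memL2 (d : ℕ) (lam : ℕ → Finset (Fin d) → ℝ) (hlam : fgmAdmissible d lam)
    (M : Finset (Fin d)) (k : ℕ) (B : ℝ)
    (hb : ∀ x ∈ Set.Icc (0:ℝ) 1, |phiFGM k x| ≤ B) :
    MemLp (fun u : Fin d → ℝ => ∏ m ∈ M, phiFGM k (u m)) 2 (fgmMeasure d lam) := by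
  haveI := fgm_prob d lam hlam
  have hc : Continuous fun u : Fin d → ℝ => ∏ m ∈ M, phiFGM k (u m) :=
    continuous_finset_prod _ fun m _ => (phi_cont k).comp (continuous_apply m)
  refine MemLp.of_bound hc.aestronglyMeasurable (B ^ M.card) ?_
  have habs : fgmMeasure d lam ≪ muP d := by
    rw [fgm_eq]
    exact withDensity_absolutelyContinuous _ _
  filter_upwards [habs.ae_le (ae_cube d)] with u hu
  rw [Real.norm_eq_abs]
  exact prod_phi_bound d k B hb M u hu

/-! ### Main theorem -/

theorem stmt_10 (d : ℕ) (hd : 2 ≤ d) (lam : ℕ → Finset (Fin d) → ℝ)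
    (hlam : fgmAdmissible d lam) (M : Finset (Fin d)) (hM : 2 ≤ M.card) :
    ProbabilityTheory.variance (fun u => ∏ m ∈ M, phiFGM 1 (u m)) (fgmMeasure d lam) =
      (1 + ∑ N ∈ M.powerset.filter (fun N : Finset (Fin d) => 2 ≤ N.card),
          (2 / Real.sqrt 5) ^ N.card * lam 2 N) - (lam 1 M) ^ 2 ∧
    ProbabilityTheory.variance (fun u => ∏ m ∈ M, phiFGM 2 (u m)) (fgmMeasure d lam) =
      (1 + ∑ N ∈ M.powerset.filter (fun N : Finset (Fin d) => 2 ≤ N.card),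
          (2 * Real.sqrt 5 / 7) ^ N.card * lam 2 N) - (lam 2 M) ^ 2 := by
  classical
  haveI := fgm_prob d lam hlam
  have hMcard : M.card ≠ 0 := by omega
  have hMA : M ∈ Finset.univ.powerset.filter (fun N : Finset (Fin d) => 2 ≤ N.card) :=
    Finset.mem_filter.mpr ⟨Finset.mem_powerset.mpr (Finset.subset_univ M), hM⟩
  -- means
  have mean_simp : ∀ (c1 c2 : Finset (Fin d) → ℝ),
      (∀ N, N ∈ Finset.univ.powerset.filter (fun N : Finset (Fin d) => 2 ≤ N.card) →
        N ≠ M → c1 N + c2 N = 0) →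
      (∑ N ∈ Finset.univ.powerset.filter (fun N : Finset (Fin d) => 2 ≤ N.card),
        (c1 N + c2 N)) = c1 M + c2 M := by
    intro c1 c2 h0
    exact Finset.sum_eq_single M (fun N hN hne => h0 N hN hne) (fun h => absurd hMA h)
  have hmean1 : ∫ u, ∏ m ∈ M, phiFGM 1 (u m) ∂(fgmMeasure d lam) = lam 1 M := by
    rw [fgm_moment d lam hlam M (phiFGM 1) (phi_cont 1) 0 1 0 int_phi1 int_p1p1 int_p2p1]
    rw [zero_pow hMcard, zero_add]
    rw [Finset.sum_eq_single M ?_ (fun h => absurd hMA h)]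
    · simp [Finset.inter_self, Finset.sdiff_self, zero_pow hMcard]
    · intro N hN hne
      have hor : (M \ N).card ≠ 0 ∨ (N \ M).card ≠ 0 := by
        by_contra hcon
        push_neg at hcon
        exact hne (Finset.Subset.antisymm
          (Finset.sdiff_eq_empty_iff_subset.mp (Finset.card_eq_zero.mp hcon.2))
          (Finset.sdiff_eq_empty_iff_subset.mp (Finset.card_eq_zero.mp hcon.1)))
      rcases hor with h | h
      · rw [zero_pow h]; ring
      · rw [zero_pow h]; ring
  have hmean2 : ∫ u, ∏ m ∈ M, phiFGM 2 (u m) ∂(fgmMeasure d lam) = lam 2 M := by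
    rw [fgm_moment d lam hlam M (phiFGM 2) (phi_cont 2) 0 0 1 int_phi2 int_p1p2 int_p2p2]
    rw [zero_pow hMcard, zero_add]
    rw [Finset.sum_eq_single M ?_ (fun h => absurd hMA h)]
    · simp [Finset.inter_self, Finset.sdiff_self, zero_pow hMcard]
    · intro N hN hne
      have hor : (M \ N).card ≠ 0 ∨ (N \ M).card ≠ 0 := by
        by_contra hcon
        push_neg at hcon
        exact hne (Finset.Subset.antisymm
          (Finset.sdiff_eq_empty_iff_subset.mp (Finset.card_eq_zero.mp hcon.2))
          (Finset.sdiff_eq_empty_iff_subset.mp (Finset.card_eq_zero.mp hcon.1)))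
      rcases hor with h | h
      · rw [zero_pow h]; ring
      · rw [zero_pow h]; ring
  -- second moments
  have sum_simp : ∀ t : ℝ,
      (∑ N ∈ Finset.univ.powerset.filter (fun N : Finset (Fin d) => 2 ≤ N.card),
        (lam 1 N * (0 ^ (M ∩ N).card * 1 ^ (M \ N).card * 0 ^ (N \ M).card)
          + lam 2 N * (t ^ (M ∩ N).card * 1 ^ (M \ N).card * 0 ^ (N \ M).card)))
      = ∑ N ∈ M.powerset.filter (fun N : Finset (Fin d) => 2 ≤ N.card),
          t ^ N.card * lam 2 N := by
    intro t
    have step1 : ∀ N ∈ Finset.univ.powerset.filter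
        (fun N : Finset (Fin d) => 2 ≤ N.card),
        (lam 1 N * (0 ^ (M ∩ N).card * 1 ^ (M \ N).card * 0 ^ (N \ M).card)
          + lam 2 N * (t ^ (M ∩ N).card * 1 ^ (M \ N).card * 0 ^ (N \ M).card))
        = lam 2 N * (t ^ (M ∩ N).card * 0 ^ (N \ M).card) := by
      intro N hN
      rw [Finset.mem_filter] at hN
      have hfirst : (0:ℝ) ^ (M ∩ N).card * 1 ^ (M \ N).card * 0 ^ (N \ M).card = 0 := by
        have hor : (M ∩ N).card ≠ 0 ∨ (N \ M).card ≠ 0 := by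
          by_contra hcon
          push_neg at hcon
          have h1 : M ∩ N = ∅ := Finset.card_eq_zero.mp hcon.1
          have h2 : N ⊆ M := Finset.sdiff_eq_empty_iff_subset.mp
            (Finset.card_eq_zero.mp hcon.2)
          have : N = ∅ := by
            rw [← h1]
            exact Finset.Subset.antisymm (fun x hx => Finset.mem_inter.mpr ⟨h2 hx, hx⟩)
              (Finset.inter_subset_right)
          rw [this] at hN
          simp at hN
        rcases hor with h | h
        · rw [zero_pow h]; ring
        · rw [zero_pow h]; ring
      rw [hfirst, mul_zero, zero_add, one_pow, mul_one]
    rw [Finset.sum_congr rfl step1]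
    have hsub : M.powerset.filter (fun N : Finset (Fin d) => 2 ≤ N.card)
        ⊆ Finset.univ.powerset.filter (fun N : Finset (Fin d) => 2 ≤ N.card) := by
      intro N hN
      rw [Finset.mem_filter] at hN ⊢
      exact ⟨Finset.mem_powerset.mpr (Finset.subset_univ N), hN.2⟩
    rw [← Finset.sum_subset hsub ?_]
    · refine Finset.sum_congr rfl fun N hN => ?_
      rw [Finset.mem_filter, Finset.mem_powerset] at hN
      rw [Finset.inter_eq_right.mpr hN.1,
        Finset.sdiff_eq_empty_iff_subset.mpr hN.1, Finset.card_empty, pow_zero, mul_one]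
      ring
    · intro N hN hNM
      rw [Finset.mem_filter] at hN
      have : ¬ N ⊆ M := by
        intro hc
        exact hNM (Finset.mem_filter.mpr ⟨Finset.mem_powerset.mpr hc, hN.2⟩)
      have hne : (N \ M).card ≠ 0 := by
        intro hc
        exact this (Finset.sdiff_eq_empty_iff_subset.mp (Finset.card_eq_zero.mp hc))
      rw [zero_pow hne]
      ring
  have hsq1 : ∫ u, (∏ m ∈ M, phiFGM 1 (u m)) ^ 2 ∂(fgmMeasure d lam)
      = 1 + ∑ N ∈ M.powerset.filter (fun N : Finset (Fin d) => 2 ≤ N.card),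
          (2 / Real.sqrt 5) ^ N.card * lam 2 N := by
    have hrw : (fun u : Fin d → ℝ => (∏ m ∈ M, phiFGM 1 (u m)) ^ 2)
        = fun u => ∏ m ∈ M, (fun x => phiFGM 1 x ^ 2) (u m) := by
      funext u
      rw [← Finset.prod_pow]
    rw [hrw, fgm_moment d lam hlam M (fun x => phiFGM 1 x ^ 2)
      ((phi_cont 1).pow 2) 1 0 (2 / Real.sqrt 5)
      int_sq1 int_p1sq1 int_p2sq1]
    rw [one_pow, sum_simp]
  have hsq2 : ∫ u, (∏ m ∈ M, phiFGM 2 (u m)) ^ 2 ∂(fgmMeasure d lam)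
      = 1 + ∑ N ∈ M.powerset.filter (fun N : Finset (Fin d) => 2 ≤ N.card),
          (2 * Real.sqrt 5 / 7) ^ N.card * lam 2 N := by
    have hrw : (fun u : Fin d → ℝ => (∏ m ∈ M, phiFGM 2 (u m)) ^ 2)
        = fun u => ∏ m ∈ M, (fun x => phiFGM 2 x ^ 2) (u m) := by
      funext u
      rw [← Finset.prod_pow]
    rw [hrw, fgm_moment d lam hlam M (fun x => phiFGM 2 x ^ 2)
      ((phi_cont 2).pow 2) 1 0 (2 * Real.sqrt 5 / 7)
      int_sq2 int_p1sq2 int_p2sq2]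
    rw [one_pow, sum_simp]
  constructor
  · rw [variance_eq_sub (fgm_memL2 d lam hlam M 1 (Real.sqrt 3) phi1_bound)]
    have hpow : (fun u : Fin d → ℝ => ∏ m ∈ M, phiFGM 1 (u m)) ^ 2
        = fun u => (∏ m ∈ M, phiFGM 1 (u m)) ^ 2 := by
      funext u
      simp [Pi.pow_apply]
    rw [hpow, hsq1, hmean1]
  · rw [variance_eq_sub (fgm_memL2 d lam hlam M 2 (Real.sqrt 5) phi2_bound)]
    have hpow : (fun u : Fin d → ℝ => ∏ m ∈ M, phiFGM 2 (u m)) ^ 2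
        = fun u => (∏ m ∈ M, phiFGM 2 (u m)) ^ 2 := by
      funext u
      simp [Pi.pow_apply]
    rw [hpow, hsq2, hmean2]
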